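/- Let S > 0, T > 0, K ∈ ℝ. The Jacobian of the plant–soil system at E₂ = (S, 0, 1, 0) has eigenvalues -S, 1 - K - S, and -(S ± √(S(S-4)))/2. Consequently all eigenvalues have negative real part if and only if K > 1 - S. -/

import Mathlib

open Polynomial

set_option maxHeartbeats 1000000

/-- Jacobian of the plant-soil model evaluated at E₂ = (S, 0, 1, 0), over ℂ. -/
noncomputable def JE2 (K S T : ℝ) : Matrix (Fin 4) (Fin 4) ℂ :=
  !![1 - 0 - 1 - (K : ℂ) * 0, -(S : ℂ), -(S : ℂ), -(K : ℂ) * S;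
     -0, 1 - (S : ℂ) - (K : ℂ) * 1 - 0, -(K : ℂ) * 0, -0;
     1, 0, -(S : ℂ), 0;
     0, (T : ℂ), 0, -(S : ℂ)]

theorem E2_eigenvalues_and_stability (K S T : ℝ) (hS : 0 < S) (hT : 0 < T) :
    let d : ℂ := ((S : ℂ) * ((S : ℂ) - 4)) ^ ((1 : ℂ) / 2)
    (JE2 K S T).charpoly.roots =
      {-(S : ℂ), 1 - (K : ℂ) - (S : ℂ), -((S : ℂ) + d) / 2, -((S : ℂ) - d) / 2} ∧
    ((∀ μ ∈ (JE2 K S T).charpoly.roots, μ.re < 0) ↔ 1 - S < K) := by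
  intro d
  -- d squared
  have hd2 : d ^ 2 = (S : ℂ) * ((S : ℂ) - 4) := by
    by_cases h : (S : ℂ) * ((S : ℂ) - 4) = 0
    · simp [d, h, Complex.zero_cpow (by norm_num : (1:ℂ)/2 ≠ 0)]
    · have : d * d = (S : ℂ) * ((S : ℂ) - 4) := by
        rw [show d * d = ((S:ℂ)*((S:ℂ)-4)) ^ ((1:ℂ)/2 + (1:ℂ)/2) from
          (Complex.cpow_add _ _ h).symm]
        norm_num
      simpa [sq] using this
  -- charpoly factorization
  have hcp : (JE2 K S T).charpoly =
      (X + C (S:ℂ)) * (X - C (1 - (K:ℂ) - S)) * (X^2 + C (S:ℂ) * X + C (S:ℂ)) := by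
    have hm : (JE2 K S T).charmatrix =
        !![X, C (S:ℂ), C (S:ℂ), C ((K:ℂ) * S);
           0, X - C (1 - (S:ℂ) - K), 0, 0;
           -1, 0, X + C (S:ℂ), 0;
           0, -C (T:ℂ), 0, X + C (S:ℂ)] := by
      ext i j
      fin_cases i <;> fin_cases j <;>
        simp [JE2, Matrix.charmatrix_apply, Matrix.one_apply] <;> ring
    rw [Matrix.charpoly, hm, Matrix.det_succ_row_zero]
    simp [Fin.sum_univ_succ, Matrix.det_fin_three, Fin.succAbove,
      Matrix.submatrix_apply, Fin.castSucc, Fin.castAdd, Fin.castLE,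
      show ((2:Fin 3):Fin 4) = 2 from rfl]
    ring
  have hquad : (X - C (-((S:ℂ) + d) / 2)) * (X - C (-((S:ℂ) - d) / 2)) =
      X^2 + C (S:ℂ) * X + C (S:ℂ) := by
    have h1 : -((S:ℂ) + d) / 2 + -((S:ℂ) - d) / 2 = -(S:ℂ) := by ring
    have h2 : (-((S:ℂ) + d) / 2) * (-((S:ℂ) - d) / 2) = (S:ℂ) := by
      linear_combination (-(1:ℂ)/4) * hd2
    calc (X - C (-((S:ℂ) + d) / 2)) * (X - C (-((S:ℂ) - d) / 2))
        = X^2 - C (-((S:ℂ) + d) / 2 + -((S:ℂ) - d) / 2) * X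
            + C ((-((S:ℂ) + d) / 2) * (-((S:ℂ) - d) / 2)) := by
          simp only [map_add, map_mul]; ring
      _ = X^2 + C (S:ℂ) * X + C (S:ℂ) := by rw [h1, h2, map_neg]; ring
  have hfact : (JE2 K S T).charpoly =
      (X - C (-(S:ℂ))) * ((X - C (1 - (K:ℂ) - S)) *
        ((X - C (-((S:ℂ) + d) / 2)) * ((X - C (-((S:ℂ) - d) / 2)) * 1))) := by
    rw [hcp, mul_one, ← hquad, map_neg]; ring
  have hroots : (JE2 K S T).charpoly.roots =
      ({-(S : ℂ), 1 - (K : ℂ) - (S : ℂ), -((S : ℂ) + d) / 2, -((S : ℂ) - d) / 2} :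
        Multiset ℂ) := by
    rw [hfact, show (X - C (-(S:ℂ))) * ((X - C (1 - (K:ℂ) - S)) *
        ((X - C (-((S:ℂ) + d) / 2)) * ((X - C (-((S:ℂ) - d) / 2)) * 1))) =
      (Multiset.map (fun a => X - C a)
        ({-(S : ℂ), 1 - (K : ℂ) - (S : ℂ), -((S : ℂ) + d) / 2, -((S : ℂ) - d) / 2} :
          Multiset ℂ)).prod by
        simp [Multiset.insert_eq_cons]]
    exact roots_multiset_prod_X_sub_C _
  refine ⟨hroots, ?_⟩
  -- real part of d
  have hdre : d.re = Real.sqrt ((|S * (S - 4)| + S * (S - 4)) / 2) := by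
    have : d = ((S * (S - 4) : ℝ) : ℂ) ^ (2⁻¹ : ℂ) := by
      unfold d; push_cast; norm_num
    rw [this, Complex.cpow_inv_two_re, Complex.norm_real, Real.norm_eq_abs, Complex.ofReal_re]
  have hd0 : 0 ≤ d.re := hdre ▸ Real.sqrt_nonneg _
  have hdS : d.re < S := by
    rw [hdre, Real.sqrt_lt' hS]
    rcases abs_cases (S * (S - 4)) with ⟨h1, h2⟩ | ⟨h1, h2⟩ <;> nlinarith
  -- real parts of the roots
  have hr3 : (-((S : ℂ) + d) / 2).re = -(S + d.re) / 2 := by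
    rw [show (2:ℂ) = ((2:ℝ):ℂ) by norm_num, Complex.div_ofReal_re]
    simp
  have hr4 : (-((S : ℂ) - d) / 2).re = -(S - d.re) / 2 := by
    rw [show (2:ℂ) = ((2:ℝ):ℂ) by norm_num, Complex.div_ofReal_re]
    simp
  rw [hroots]
  simp only [Multiset.insert_eq_cons, Multiset.mem_cons, Multiset.mem_singleton,
    forall_eq_or_imp, forall_eq, hr3, hr4, Complex.neg_re, Complex.ofReal_re,
    Complex.sub_re, Complex.one_re]
  constructor
  · rintro ⟨-, h2, -, -⟩; linarith
  · intro h
    refine ⟨by linarith, by linarith, by linarith, by linarith⟩
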